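/- Let ℙ = {1, 2, 3, …} with the discrete topology, let A = Π_{n=1}^∞ ℙ^∞ be the product of the one-point compactifications of ℙ, let W_0 = ({0} ∪ ∪_{k=1}^∞ ℙ^k) ∪ Π_{n=1}^∞ ℙ, and let Y_0 = {0} ∪ ∪_{k=1}^∞ ℙ^k be the set of finite strings. Define β : A → 2^{Y_0} by β(x)(y) = 1 iff x begins with y (i.e. y is an initial segment of x read before truncation at its first infinite coordinate), and α : W_0 → 2^{Y_0} by α(w)(y) = 1 iff y is an initial segment of w. Then β is continuous, β = α ∘ Q, and consequently the quotient topology on W_0 induced by Q coincides with the topology on W_0 obtained by pulling back the product topology of 2^{Y_0} along the injection α. -/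

import Mathlib

open Filter Topology

/-- The set `W₀ = Y₀ ∪ Z`: the disjoint union of the finite products
`Y^k = X_1 × ⋯ × X_k` (with `Y^0 = {0}` a single point, the empty string) and the
infinite product `Z = Π_{n} X_n`.  (Indices are `0`-based here: `X 0, X 1, …` play the
roles of `X_1, X_2, …`.) -/
def W0 (X : ℕ → Type) : Type := (Σ k : ℕ, ∀ i : Fin k, X i) ⊕ (∀ n, X n)

namespace W0

variable {X : ℕ → Type}

/-- A finite string, an element of `Y₀ = ∪_k Y^k ⊂ W₀`. -/
def fin (p : Σ k : ℕ, ∀ i : Fin k, X i) : W0 X := Sum.inl p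

/-- An infinite string, an element of `Z = Π_n X_n ⊂ W₀`. -/
def inf (z : ∀ n, X n) : W0 X := Sum.inr z

/-- The point `0`, the empty string: the unique element of `Y^0`. -/
def zero : W0 X := Sum.inl ⟨0, fun i => i.elim0⟩

/-- The length `ℓ(w) ∈ ℕ ∪ {∞}` of an element of `W₀`. -/
def len : W0 X → ℕ∞ := Sum.elim (fun p => (p.1 : ℕ∞)) (fun _ => ⊤)

/-- The `i`-th coordinate of an element of `W₀`, as an element of the one-point
compactification `X_i^∞`; it is taken to be `∞_i` when `i ≥ ℓ(w)`. -/
def coord (w : W0 X) (i : ℕ) : OnePoint (X i) :=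
  Sum.elim
    (fun p : Σ k : ℕ, ∀ j : Fin k, X j =>
      if h : i < p.1 then ((p.2 ⟨i, h⟩ : X i) : OnePoint (X i)) else OnePoint.infty)
    (fun z => ((z i : X i) : OnePoint (X i))) w

/-- The value of a point of `X^∞` other than `∞`. -/
noncomputable def val {Y : Type} (o : OnePoint Y) (h : o ≠ OnePoint.infty) : Y :=
  (OnePoint.ne_infty_iff_exists.mp h).choose

open Classical in
/-- The truncation map `Q : A = Π_n X_n^∞ → W₀`: `Q({x_i}) = {x_i} ∈ Z` if no
coordinate is a point at infinity; `Q({x_i}) = (x_1, …, x_n) ∈ Y^n` if `n` is smallest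
with `x_{n+1} = ∞_{n+1}`; `Q({x_i}) = 0` if `x_1 = ∞_1`. -/
noncomputable def Q (x : ∀ n, OnePoint (X n)) : W0 X :=
  if h : ∃ n, x n = OnePoint.infty then
    fin ⟨Nat.find h, fun i => val (x i) (Nat.find_min h i.isLt)⟩
  else
    inf fun n => val (x n) (fun hn => h ⟨n, hn⟩)

/-- `W₀` carries the quotient topology induced by the surjection `Q` from the product
`A = Π_n X_n^∞` of the one-point compactifications. -/
noncomputable instance [∀ n, TopologicalSpace (X n)] : TopologicalSpace (W0 X) :=
  TopologicalSpace.coinduced Q Pi.topologicalSpace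

end W0

/-- `ℙ = {1, 2, 3, …}` carries the discrete topology. -/
instance : TopologicalSpace ℕ+ := ⊥

instance : DiscreteTopology ℕ+ := ⟨rfl⟩

/-- `W₀` for the Cuntz graph `𝓔_∞`: finite and infinite strings over `ℙ`. -/
abbrev W0P : Type := W0 (fun _ => ℕ+)

/-- `Y₀`: the set of finite strings over `ℙ` (including the empty string `0`). -/
def Y0P : Type := Σ k : ℕ, Fin k → ℕ+

open Classical in
/-- `β : A → 2^{Y₀}`: `β(x)(y) = 1` iff `x` begins with `y`, i.e. the first `ℓ(y)`
coordinates of `x` lie in `ℙ` and equal those of `y`. -/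
noncomputable def betaP (x : ∀ _ : ℕ, OnePoint ℕ+) : Y0P → Bool := fun y =>
  if ∀ i : Fin y.1, x i = ((y.2 i : ℕ+) : OnePoint ℕ+) then true else false

open Classical in
/-- `α : W₀ → 2^{Y₀}`: `α(w)(y) = 1` iff `y` is an initial segment of `w`. -/
noncomputable def alphaP (w : W0P) : Y0P → Bool := fun y =>
  if (y.1 : ℕ∞) ≤ W0.len w ∧ ∀ i : Fin y.1, W0.coord w i = ((y.2 i : ℕ+) : OnePoint ℕ+)
    then true else false

namespace W0

variable {X : ℕ → Type}

lemma coe_val {Y : Type} (o : OnePoint Y) (h : o ≠ OnePoint.infty) :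
    ((val o h : Y) : OnePoint Y) = o :=
  (OnePoint.ne_infty_iff_exists.mp h).choose_spec

lemma coord_ne_infty_of_lt_len {w : W0 X} {i : ℕ} (h : (i : ℕ∞) < len w) :
    coord w i ≠ OnePoint.infty := by
  cases w with
  | inl p =>
      simp only [len, Sum.elim_inl, Nat.cast_lt] at h
      simp only [coord, Sum.elim_inl, dif_pos h]
      exact OnePoint.coe_ne_infty _
  | inr z => exact OnePoint.coe_ne_infty _

lemma coord_eq_infty_of_le {w : W0 X} {i : ℕ} (h : len w ≤ (i : ℕ∞)) :
    coord w i = OnePoint.infty := by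
  cases w with
  | inl p =>
      simp only [len, Sum.elim_inl, Nat.cast_le] at h
      simp only [coord, Sum.elim_inl, dif_neg (not_lt.mpr h)]
  | inr z => exact absurd h (by simp [len])

lemma ext_of {w w' : W0 X} (hlen : len w = len w')
    (hc : ∀ i, coord w i = coord w' i) : w = w' := by
  cases w with
  | inl p =>
    cases w' with
    | inl q =>
        obtain ⟨k, f⟩ := p
        obtain ⟨k', g⟩ := q
        have hk : k = k' := by
          simp only [len, Sum.elim_inl] at hlen
          exact_mod_cast hlen
        subst hk
        have : f = g := by
          funext i
          have := hc i
          simp only [coord, Sum.elim_inl, dif_pos i.isLt] at this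
          exact OnePoint.coe_injective this
        rw [this]
    | inr z => exact absurd hlen (by simp [len])
  | inr z =>
    cases w' with
    | inl q => exact absurd hlen (by simp [len])
    | inr z' =>
        have : z = z' := by
          funext n
          have := hc n
          simp only [coord, Sum.elim_inr] at this
          exact OnePoint.coe_injective this
        rw [this]

open Classical in
lemma len_Q_pos (x : ∀ n, OnePoint (X n)) (h : ∃ n, x n = OnePoint.infty) :
    len (Q x) = ((Nat.find h : ℕ) : ℕ∞) := by
  rw [Q, dif_pos h]; rfl

open Classical in
lemma coord_Q_pos (x : ∀ n, OnePoint (X n)) (h : ∃ n, x n = OnePoint.infty)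
    (i : ℕ) (hi : i < Nat.find h) : coord (Q x) i = x i := by
  rw [Q, dif_pos h]
  simp only [fin, coord, Sum.elim_inl, dif_pos hi]
  exact coe_val _ _

lemma len_Q_neg (x : ∀ n, OnePoint (X n)) (h : ¬ ∃ n, x n = OnePoint.infty) :
    len (Q x) = ⊤ := by
  rw [Q, dif_neg h]; rfl

lemma coord_Q_neg (x : ∀ n, OnePoint (X n)) (h : ¬ ∃ n, x n = OnePoint.infty)
    (i : ℕ) : coord (Q x) i = x i := by
  rw [Q, dif_neg h]
  simp only [inf, coord, Sum.elim_inr]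
  exact coe_val _ _

lemma Q_surjective : Function.Surjective (Q : (∀ n, OnePoint (X n)) → W0 X) := by
  intro w
  classical
  cases w with
  | inl p =>
      obtain ⟨k, f⟩ := p
      refine ⟨fun n => if h : n < k then ((f ⟨n, h⟩ : X n) : OnePoint (X n))
        else OnePoint.infty, ?_⟩
      have hex : ∃ n, (if h : n < k then ((f ⟨n, h⟩ : X n) : OnePoint (X n))
          else OnePoint.infty) = OnePoint.infty := ⟨k, by simp⟩
      have hfind : Nat.find hex = k := by
        rw [Nat.find_eq_iff]
        refine ⟨by simp, fun m hm => ?_⟩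
        simp only [dif_pos hm]
        exact OnePoint.coe_ne_infty _
      apply ext_of
      · rw [len_Q_pos _ hex]
        simp only [fin, len, Sum.elim_inl]
        exact_mod_cast hfind
      · intro i
        by_cases hik : i < k
        · rw [coord_Q_pos _ hex i (lt_of_lt_of_le hik (le_of_eq hfind.symm))]
          simp only [fin, coord, Sum.elim_inl, dif_pos hik]
        · rw [coord_eq_infty_of_le (w := Q _), coord_eq_infty_of_le (w := (Sum.inl ⟨k, f⟩ : W0 X))]
          · simp only [fin, len, Sum.elim_inl, Nat.cast_le]
            exact not_lt.mp hik
          · rw [len_Q_pos _ hex, hfind]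
            exact_mod_cast not_lt.mp hik
  | inr z =>
      refine ⟨fun n => ((z n : X n) : OnePoint (X n)), ?_⟩
      have hne : ¬ ∃ n, ((z n : X n) : OnePoint (X n)) = OnePoint.infty := by
        rintro ⟨n, hn⟩; exact OnePoint.coe_ne_infty _ hn
      apply ext_of
      · rw [len_Q_neg _ hne]; rfl
      · intro i
        rw [coord_Q_neg _ hne]
        rfl

end W0

lemma enat_eq_top_of_forall {a : ℕ∞} (h : ∀ k : ℕ, (k : ℕ∞) ≤ a) : a = ⊤ := by
  cases a with
  | top => rfl
  | coe m => exact absurd (h (m + 1)) (by exact_mod_cast Nat.not_succ_le_self m)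

lemma alphaP_true_iff (w : W0P) (y : Y0P) :
    alphaP w y = true ↔
      (y.1 : ℕ∞) ≤ W0.len w ∧
        ∀ i : Fin y.1, W0.coord w i = ((y.2 i : ℕ+) : OnePoint ℕ+) := by
  unfold alphaP
  split_ifs with h <;> simp [h]

lemma alphaP_injective : Function.Injective alphaP := by
  have key : ∀ (v v' : W0P), alphaP v = alphaP v' → ∀ k : ℕ, (k : ℕ∞) ≤ W0.len v →
      (k : ℕ∞) ≤ W0.len v' ∧ ∀ i : Fin k, W0.coord v' i = W0.coord v i := by
    intro v v' hv k hk
    have hne : ∀ i : Fin k, W0.coord v i ≠ OnePoint.infty := fun i =>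
      W0.coord_ne_infty_of_lt_len (lt_of_lt_of_le (by exact_mod_cast i.isLt) hk)
    have h1 : alphaP v (⟨k, fun i => W0.val (W0.coord v i) (hne i)⟩ : Y0P) = true := by
      refine (alphaP_true_iff _ _).mpr ?_
      exact ⟨hk, fun i => (W0.coe_val (W0.coord v i) (hne i)).symm⟩
    rw [hv] at h1; replace h1 := (alphaP_true_iff _ _).mp h1; dsimp only at h1
    exact ⟨h1.1, fun i => by rw [h1.2 i, W0.coe_val]⟩
  intro w w' h
  have hlen : W0.len w = W0.len w' := by
    have h1 : W0.len w ≤ W0.len w' := by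
      cases hw : W0.len w with
      | top =>
          have := enat_eq_top_of_forall (fun k => (key w w' h k (by simp [hw])).1)
          simp [this]
      | coe m => exact (key w w' h m (by simp [hw])).1
    have h2 : W0.len w' ≤ W0.len w := by
      cases hw : W0.len w' with
      | top =>
          have := enat_eq_top_of_forall (fun k => (key w' w h.symm k (by simp [hw])).1)
          simp [this]
      | coe m => exact (key w' w h.symm m (by simp [hw])).1
    exact le_antisymm h1 h2
  apply W0.ext_of hlen
  intro i
  by_cases hi : (i : ℕ∞) < W0.len w
  · have hi1 : ((i + 1 : ℕ) : ℕ∞) ≤ W0.len w := by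
      rw [Nat.cast_add, Nat.cast_one]
      exact Order.add_one_le_of_lt hi
    exact ((key w w' h (i + 1) hi1).2 ⟨i, Nat.lt_succ_self i⟩).symm
  · have hle : W0.len w ≤ (i : ℕ∞) := not_lt.mp hi
    rw [W0.coord_eq_infty_of_le hle, W0.coord_eq_infty_of_le (hlen ▸ hle)]

lemma betaP_continuous : Continuous betaP := by
  classical
  rw [continuous_pi_iff]
  intro y
  have heq : (fun x => betaP x y) =
      Set.boolIndicator {x : ∀ _ : ℕ, OnePoint ℕ+ |
        ∀ i : Fin y.1, x i = ((y.2 i : ℕ+) : OnePoint ℕ+)} := by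
    funext x
    by_cases hx : ∀ i : Fin y.1, x i = ((y.2 i : ℕ+) : OnePoint ℕ+) <;>
      simp [betaP, Set.boolIndicator, Set.mem_setOf_eq, hx]
  rw [heq, continuous_boolIndicator_iff_isClopen]
  have hset : {x : ∀ _ : ℕ, OnePoint ℕ+ | ∀ i : Fin y.1, x i = ((y.2 i : ℕ+) : OnePoint ℕ+)} =
      ⋂ i : Fin y.1, (fun x : ∀ _ : ℕ, OnePoint ℕ+ => x (i : ℕ)) ⁻¹'
        {((y.2 i : ℕ+) : OnePoint ℕ+)} := by
    ext x; simp
  rw [hset]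
  refine isClopen_iInter_of_finite fun i => ?_
  refine IsClopen.preimage ⟨isClosed_singleton, ?_⟩ (continuous_apply _)
  rw [OnePoint.isOpen_iff_of_notMem
    (fun hmem => OnePoint.coe_ne_infty (y.2 i) (Set.mem_singleton_iff.mp hmem).symm)]
  exact isOpen_discrete _

lemma betaP_eq : betaP = alphaP ∘ W0.Q := by
  classical
  funext x y
  obtain ⟨k, f⟩ := y
  simp only [betaP, alphaP, Function.comp_apply]
  have hcond : (∀ i : Fin k, x i = ((f i : ℕ+) : OnePoint ℕ+)) ↔
      ((k : ℕ∞) ≤ W0.len (W0.Q x) ∧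
        ∀ i : Fin k, W0.coord (W0.Q x) i = ((f i : ℕ+) : OnePoint ℕ+)) := by
    by_cases h : ∃ n, x n = OnePoint.infty
    · rw [W0.len_Q_pos x h]
      constructor
      · intro hx
        have hkN : k ≤ Nat.find h := by
          rw [Nat.le_find_iff]
          intro m hm hinf
          exact OnePoint.coe_ne_infty (f ⟨m, hm⟩) (hx ⟨m, hm⟩ ▸ hinf)
        refine ⟨by exact_mod_cast hkN, fun i => ?_⟩
        rw [W0.coord_Q_pos x h i (lt_of_lt_of_le i.isLt hkN)]
        exact hx i
      · rintro ⟨hkN, hc⟩ i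
        have hkN' : k ≤ Nat.find h := by exact_mod_cast hkN
        rw [← hc i, W0.coord_Q_pos x h i (lt_of_lt_of_le i.isLt hkN')]
    · rw [W0.len_Q_neg x h]
      simp only [le_top, true_and]
      constructor
      · intro hx i
        rw [W0.coord_Q_neg x h i]
        exact hx i
      · intro hc i
        rw [← hc i, W0.coord_Q_neg x h i]
  by_cases hC : ∀ i : Fin k, x i = ((f i : ℕ+) : OnePoint ℕ+)
  · rw [if_pos hC, if_pos (hcond.mp hC)]
  · rw [if_neg hC, if_neg (fun hc => hC (hcond.mpr hc))]

/-- `β` is continuous, `β = α ∘ Q`, and consequently the quotient topology on `W₀`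
induced by `Q` coincides with the topology pulled back from the product topology on
`2^{Y₀}` along the injection `α`. -/
theorem stmt11 :
    Continuous betaP ∧ betaP = alphaP ∘ W0.Q ∧
      (inferInstanceAs (TopologicalSpace W0P) =
        TopologicalSpace.induced alphaP inferInstance) := by
  refine ⟨betaP_continuous, betaP_eq, ?_⟩
  apply le_antisymm
  · change TopologicalSpace.coinduced W0.Q Pi.topologicalSpace ≤ _
    rw [coinduced_le_iff_le_induced, induced_compose, ← betaP_eq]
    exact continuous_iff_le_induced.mp betaP_continuous
  · intro U hU
    rw [isOpen_coinduced] at hU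
    rw [isOpen_induced_iff]
    refine ⟨(betaP '' (W0.Q ⁻¹' U)ᶜ)ᶜ, ?_, ?_⟩
    · rw [isOpen_compl_iff]
      exact (betaP_continuous.isClosedMap) _ (isClosed_compl_iff.mpr hU)
    · ext w
      simp only [Set.mem_preimage, Set.mem_compl_iff, Set.mem_image, not_exists, not_and]
      constructor
      · intro hw
        by_contra hwU
        obtain ⟨a, ha⟩ := W0.Q_surjective w
        exact hw a (by simpa [Set.mem_preimage, ha] using hwU)
          (by rw [betaP_eq]; simp [Function.comp, ha])
      · intro hwU a haC hab
        rw [betaP_eq] at hab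
        have : W0.Q a = w := alphaP_injective hab
        exact haC (by simpa [Set.mem_preimage, this] using hwU)
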